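/- Let K be a field containing a primitive cube root of unity ζ₃ (so char K ≠ 3), and let σ be the K-automorphism of K(y₁,y₂,y₃) with σ(y₁)=y₁, σ(y₂)=ζ₃y₂, σ(y₃)=ζ₃²y₃. Then K(y₁,y₂,y₃)^{⟨σ⟩} = K(y₁, y₂²/y₃, y₃²/y₂). -/

import Mathlib

set_option maxHeartbeats 2000000
set_option synthInstance.maxHeartbeats 1000000

open IntermediateField Module

/-- If `ζ₃ ∈ K` is a primitive cube root of unity and `σ` is the automorphism of
`K(y₁,y₂,y₃)` with `σ(y₁)=y₁, σ(y₂)=ζ₃y₂, σ(y₃)=ζ₃²y₃`, then the fixed field is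
`K(y₁, y₂²/y₃, y₃²/y₂)`. -/
theorem fixed_field_diagonal_zeta3 (K : Type*) [Field K] (ζ : K) (hζ : IsPrimitiveRoot ζ 3)
    (σ : FractionRing (MvPolynomial (Fin 3) K) ≃ₐ[K] FractionRing (MvPolynomial (Fin 3) K)) :
    letI R := MvPolynomial (Fin 3) K
    letI F := FractionRing R
    letI y : Fin 3 → F := fun i => algebraMap R F (MvPolynomial.X i)
    (σ (y 0) = y 0) → (σ (y 1) = algebraMap K F ζ * y 1) →
    (σ (y 2) = algebraMap K F (ζ ^ 2) * y 2) →
    IntermediateField.fixedField (Subgroup.closure {σ}) =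
      IntermediateField.adjoin K {y 0, y 1 ^ 2 / y 2, y 2 ^ 2 / y 1} := by
  intro hσ0 hσ1 hσ2
  set R := MvPolynomial (Fin 3) K with hR
  set F := FractionRing R with hF
  set y : Fin 3 → F := fun i => algebraMap R F (MvPolynomial.X i) with hy
  -- basic facts
  have hζ3 : ζ ^ 3 = 1 := hζ.pow_eq_one
  have hζne1 : ζ ≠ 1 := hζ.ne_one (by norm_num)
  have hζ0 : ζ ≠ 0 := fun h => by simp [h] at hζ3
  have hyne : ∀ i : Fin 3, y i ≠ 0 := by
    intro i h
    exact MvPolynomial.X_ne_zero i ((map_eq_zero_iff _ (IsFractionRing.injective R F)).mp h)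
  -- σ has order 3
  have hy3 : ∀ i : Fin 3, σ (σ (σ (y i))) = y i := by
    intro i
    fin_cases i
    · show σ (σ (σ (y 0))) = y 0
      rw [hσ0, hσ0, hσ0]
    · show σ (σ (σ (y 1))) = y 1
      simp only [hσ1, map_mul, σ.commutes]
      rw [← mul_assoc, ← mul_assoc, ← map_mul, ← map_mul,
        show ζ * ζ * ζ = ζ ^ 3 by ring, hζ3, map_one, one_mul]
    · show σ (σ (σ (y 2))) = y 2
      simp only [hσ2, map_mul, σ.commutes]
      rw [← mul_assoc, ← mul_assoc, ← map_mul, ← map_mul,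
        show ζ ^ 2 * ζ ^ 2 * ζ ^ 2 = (ζ ^ 3) ^ 2 by ring, hζ3, one_pow, map_one, one_mul]
  have hR3 : ∀ p : R, σ (σ (σ (algebraMap R F p))) = algebraMap R F p := by
    have : (σ.toAlgHom.comp (σ.toAlgHom.comp σ.toAlgHom)).comp (IsScalarTower.toAlgHom K R F) =
        IsScalarTower.toAlgHom K R F := by
      apply MvPolynomial.algHom_ext
      intro i
      exact hy3 i
    intro p
    simpa using DFunLike.congr_fun this p
  have hσ3' : ∀ x : F, σ (σ (σ x)) = x := by
    intro x
    obtain ⟨p, q, -, rfl⟩ := IsFractionRing.div_surjective (A := R) x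
    rw [map_div₀, map_div₀, map_div₀, hR3, hR3]
  have hσ3 : σ ^ 3 = 1 := by
    ext x
    show (σ ^ 3) x = x
    rw [pow_succ, pow_succ, pow_one, AlgEquiv.mul_apply, AlgEquiv.mul_apply]
    exact hσ3' x
  have hσne : σ ≠ 1 := by
    intro h
    have h1 : σ (y 1) = y 1 := by rw [h]; rfl
    rw [hσ1] at h1
    have : algebraMap K F ζ = 1 := by
      have := mul_right_cancel₀ (hyne 1) (h1.trans (one_mul (y 1)).symm)
      exact this
    exact hζne1 ((algebraMap K F).injective (by simpa using this))
  haveI : Fact (Nat.Prime 3) := ⟨by norm_num⟩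
  have hord : orderOf σ = 3 := orderOf_eq_prime hσ3 hσne
  have hcard : Nat.card (Subgroup.closure {σ}) = 3 := by
    rw [← Subgroup.zpowers_eq_closure, Nat.card_zpowers, hord]
  haveI hfin : Finite (Subgroup.closure {σ}) :=
    Nat.finite_of_card_ne_zero (by rw [hcard]; norm_num)
  haveI : Fintype (Subgroup.closure {σ}) := Fintype.ofFinite _
  -- generation of F by the variables
  have hmem : ∀ p : R, algebraMap R F p ∈ IntermediateField.adjoin K (Set.range y) := by
    intro p
    have hp : p ∈ Algebra.adjoin K (Set.range (MvPolynomial.X : Fin 3 → R)) := by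
      rw [MvPolynomial.adjoin_range_X]; trivial
    induction hp using Algebra.adjoin_induction with
    | mem x hx => obtain ⟨i, rfl⟩ := hx; exact subset_adjoin K _ ⟨i, rfl⟩
    | algebraMap a =>
        rw [← IsScalarTower.algebraMap_apply]
        exact (IntermediateField.adjoin K (Set.range y)).algebraMap_mem a
    | add a b _ _ ha hb => rw [map_add]; exact add_mem ha hb
    | mul a b _ _ ha hb => rw [map_mul]; exact mul_mem ha hb
  have htop : IntermediateField.adjoin K (Set.range y) = ⊤ := by
    rw [eq_top_iff]
    intro x _
    obtain ⟨p, q, -, rfl⟩ := IsFractionRing.div_surjective (A := R) x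
    exact div_mem (hmem p) (hmem q)
  -- the candidate field L
  set b : F := y 1 ^ 2 / y 2 with hb
  set c : F := y 2 ^ 2 / y 1 with hc
  set L : IntermediateField K F := IntermediateField.adjoin K {y 0, b, c} with hL
  have hbne : b ≠ 0 := div_ne_zero (pow_ne_zero 2 (hyne 1)) (hyne 2)
  have hy0L : y 0 ∈ L := subset_adjoin K _ (by left; rfl)
  have hbL : b ∈ L := subset_adjoin K _ (by right; left; rfl)
  have hcL : c ∈ L := subset_adjoin K _ (by right; right; rfl)
  -- σ fixes the generators of L
  have hζ2ne : algebraMap K F (ζ ^ 2) ≠ 0 := by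
    rw [map_ne_zero_iff _ (algebraMap K F).injective]
    exact pow_ne_zero 2 hζ0
  have hσb : σ b = b := by
    rw [hb, map_div₀, map_pow, hσ1, hσ2, mul_pow, ← map_pow, mul_div_mul_left _ _ hζ2ne]
  have hσc : σ c = c := by
    rw [hc, map_div₀, map_pow, hσ2, hσ1, mul_pow, ← map_pow,
      show ((ζ ^ 2) ^ 2 : K) = ζ * ζ ^ 3 by ring, hζ3, mul_one]
    have hζFne : algebraMap K F ζ ≠ 0 := by
      rw [map_ne_zero_iff _ (algebraMap K F).injective]; exact hζ0
    rw [mul_div_mul_left _ _ hζFne]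
  -- L is contained in the fixed field
  have hfix : ∀ x : F, σ x = x → x ∈ IntermediateField.fixedField (Subgroup.closure {σ}) := by
    intro x hx
    have h : Subgroup.closure {σ} ≤ MulAction.stabilizer (F ≃ₐ[K] F) x := by
      rw [Subgroup.closure_le]
      intro g hg
      rcases hg with rfl
      exact hx
    intro g
    exact h g.2
  have hLE : L ≤ IntermediateField.fixedField (Subgroup.closure {σ}) := by
    rw [hL, adjoin_le_iff]
    intro x hx
    rcases hx with rfl | rfl | rfl
    exacts [hfix _ hσ0, hfix _ hσb, hfix _ hσc]
  -- key algebraic identities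
  have hcube : y 1 ^ 3 = b ^ 2 * c := by
    rw [hb, hc]
    rw [eq_comm, div_pow, div_mul_div_comm, div_eq_iff (mul_ne_zero (pow_ne_zero 2 (hyne 2)) (hyne 1))]
    ring
  have hy2eq : y 2 = y 1 ^ 2 / b := by
    rw [hb]
    rw [div_div_cancel₀ (pow_ne_zero 2 (hyne 1))]
  -- F = L(y 1)
  have hy1M : y 1 ∈ L⟮y 1⟯ := mem_adjoin_simple_self L (y 1)
  have hMtop : L⟮y 1⟯ = ⊤ := by
    apply IntermediateField.restrictScalars_injective K
    rw [IntermediateField.restrictScalars_top, eq_top_iff, ← htop, adjoin_le_iff]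
    rintro x ⟨i, rfl⟩
    fin_cases i
    · show y 0 ∈ IntermediateField.restrictScalars K L⟮y 1⟯
      exact L⟮y 1⟯.algebraMap_mem ⟨y 0, hy0L⟩
    · exact hy1M
    · show y 2 ∈ IntermediateField.restrictScalars K L⟮y 1⟯
      rw [hy2eq]
      exact div_mem (pow_mem hy1M 2) (L⟮y 1⟯.algebraMap_mem ⟨b, hbL⟩)
  -- y 1 is integral of degree ≤ 3 over L
  set β : L := ⟨b ^ 2 * c, mul_mem (pow_mem hbL 2) hcL⟩ with hβ
  have haev : Polynomial.aeval (y 1) (Polynomial.X ^ 3 - Polynomial.C β) = 0 := by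
    rw [map_sub, map_pow, Polynomial.aeval_X, Polynomial.aeval_C, sub_eq_zero]
    exact hcube
  have hmonic : (Polynomial.X ^ 3 - Polynomial.C β).Monic :=
    Polynomial.monic_X_pow_sub_C β (by norm_num)
  have hint : IsIntegral L (y 1) := ⟨_, hmonic, haev⟩
  haveI : FiniteDimensional L F := by
    have h1 : FiniteDimensional L L⟮y 1⟯ := adjoin.finiteDimensional hint
    rw [hMtop] at h1
    exact (IntermediateField.topEquiv (F := L) (E := F)).toLinearEquiv.finiteDimensional
  have hle3 : finrank L F ≤ 3 := by
    have h1 : finrank L L⟮y 1⟯ = (minpoly L (y 1)).natDegree := adjoin.finrank hint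
    have h2 : finrank L F = finrank L L⟮y 1⟯ := by
      rw [hMtop]
      exact (IntermediateField.topEquiv (F := L) (E := F)).toLinearEquiv.finrank_eq.symm
    have h3 : (minpoly L (y 1)).natDegree ≤ 3 := by
      have hdvd : minpoly L (y 1) ∣ Polynomial.X ^ 3 - Polynomial.C β := minpoly.dvd L _ haev
      calc (minpoly L (y 1)).natDegree
          ≤ (Polynomial.X ^ 3 - Polynomial.C β).natDegree :=
            Polynomial.natDegree_le_of_dvd hdvd hmonic.ne_zero
        _ = 3 := by rw [Polynomial.natDegree_X_pow_sub_C]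
    omega
  -- Artin's theorem
  have hArtin : finrank (IntermediateField.fixedField (Subgroup.closure {σ})) F
      = Fintype.card (Subgroup.closure {σ}) := FixedPoints.finrank_eq_card _ F
  rw [← Nat.card_eq_fintype_card, hcard] at hArtin
  exact (IntermediateField.eq_of_le_of_finrank_le' hLE (by rw [hArtin]; exact hle3)).symm
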